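/- Let T_i = Id^{⊗(i−1)} ⊗ T ⊗ Id^{⊗(r−i−1)} acting on V^{⊗r}. Then for every i with 1 ≤ i ≤ r−2, the braid relation T_i T_{i+1} T_i = T_{i+1} T_i T_{i+1} holds in End_K(V^{⊗r}). -/
import Mathlib


set_option synthInstance.maxHeartbeats 1000000
set_option maxHeartbeats 1000000

open scoped BigOperators Kronecker

section CommonDefs

variable {R : Type*} [CommRing R]

/-- ℤ₂-degree of the basis vector `v_{k+1}` (0-based index `k`): `0` if `k < m`, else `1`. -/
def deg (m : ℕ) {N : ℕ} (k : Fin N) : ℕ := if (k : ℕ) < m then 0 else 1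

/-- The sign `(−1)^{|v_k||v_l|}`. -/
def sgn (R : Type*) [CommRing R] (m : ℕ) {N : ℕ} (k l : Fin N) : R :=
  (-1 : R) ^ (deg m k * deg m l)

/-- Entries (row = input vector) of the operator `T` on `V ⊗ V`, where `x` plays the
role of `q` and `xinv` that of `q⁻¹`:  `T(v_k ⊗ v_k) = q·v_k ⊗ v_k` if `k ≤ m`,
`T(v_k ⊗ v_k) = −q⁻¹·v_k ⊗ v_k` if `k > m`,
`T(v_k ⊗ v_l) = (−1)^{|v_k||v_l|} v_l ⊗ v_k + (q−q⁻¹) v_k ⊗ v_l` if `k < l`, and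
`T(v_k ⊗ v_l) = (−1)^{|v_k||v_l|} v_l ⊗ v_k` if `k > l`. -/
def Tent (x xinv : R) (m : ℕ) {N : ℕ} (p p' : Fin N × Fin N) : R :=
  if p.1 = p.2 then (if (p.1 : ℕ) < m then x else -xinv) * (if p' = p then 1 else 0)
  else if (p.1 : ℕ) < (p.2 : ℕ) then
    sgn R m p.1 p.2 * (if p' = (p.2, p.1) then 1 else 0)
      + (x - xinv) * (if p' = p then 1 else 0)
  else sgn R m p.1 p.2 * (if p' = (p.2, p.1) then 1 else 0)

/-- Entries of the signed swap `P(v_k ⊗ v_l) = (−1)^{|v_k||v_l|} v_l ⊗ v_k`. -/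
def Pent (R : Type*) [CommRing R] (m : ℕ) {N : ℕ} (p p' : Fin N × Fin N) : R :=
  sgn R m p.1 p.2 * (if p' = (p.2, p.1) then 1 else 0)

/-- The operator `Id^{⊗ i} ⊗ E ⊗ Id^{⊗ (r−i−2)}` on `V^{⊗ r}` obtained from a two-site
operator `E` acting on the (0-based) tensor positions `i` and `i+1`. -/
def twoSiteOp {N : ℕ} (E : Fin N × Fin N → Fin N × Fin N → R) (r i : ℕ) (h : i + 1 < r) :
    Matrix (Fin r → Fin N) (Fin r → Fin N) R := fun a b =>
  E (a ⟨i, Nat.lt_of_succ_lt h⟩, a ⟨i + 1, h⟩) (b ⟨i, Nat.lt_of_succ_lt h⟩, b ⟨i + 1, h⟩) *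
    ∏ j ∈ Finset.univ \ ({⟨i, Nat.lt_of_succ_lt h⟩, ⟨i + 1, h⟩} : Finset (Fin r)),
      (if a j = b j then (1 : R) else 0)

/-- The Hecke operator `T_{i+1} = Id^{⊗ i} ⊗ T ⊗ Id^{⊗ (r−i−2)}` on `V^{⊗ r}`
(here `i` is the 0-based position of the first tensor factor it acts on). -/
def heckeOp (x xinv : R) (m : ℕ) {N : ℕ} (r i : ℕ) (h : i + 1 < r) :
    Matrix (Fin r → Fin N) (Fin r → Fin N) R :=
  twoSiteOp (Tent x xinv m) r i h

/-- The signed swap operator `P_{i+1} = Id^{⊗ i} ⊗ P ⊗ Id^{⊗ (r−i−2)}` on `V^{⊗ r}`. -/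
def swapOp (R : Type*) [CommRing R] (m : ℕ) {N : ℕ} (r i : ℕ) (h : i + 1 < r) :
    Matrix (Fin r → Fin N) (Fin r → Fin N) R :=
  twoSiteOp (Pent R m) r i h

/-- The parity operator `S v_j = (−1)^{|v_j|} v_j`. -/
def Smat (R : Type*) [CommRing R] (m : ℕ) {N : ℕ} : Matrix (Fin N) (Fin N) R :=
  fun a b => if a = b then (-1 : R) ^ deg m a else 0

/-- The diagonal operator `Q_b v_j = q^{δ_{bj}} v_j` (`x` playing the role of `q`, or of
`q⁻¹` for the inverse operator). -/
def Qmat (x : R) {N : ℕ} (b0 : Fin N) : Matrix (Fin N) (Fin N) R :=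
  fun a b => if a = b then (if a = b0 then x else 1) else 0

/-- `E_k v_{k+1} = v_k`, `E_k v_j = 0` otherwise (0-based `k`; row = input). -/
def Emat (R : Type*) [CommRing R] {N : ℕ} (k : ℕ) : Matrix (Fin N) (Fin N) R :=
  fun a b => if (a : ℕ) = k + 1 ∧ (b : ℕ) = k then 1 else 0

/-- `F_k v_k = v_{k+1}`, `F_k v_j = 0` otherwise (0-based `k`; row = input). -/
def Fmat (R : Type*) [CommRing R] {N : ℕ} (k : ℕ) : Matrix (Fin N) (Fin N) R :=
  fun a b => if (a : ℕ) = k ∧ (b : ℕ) = k + 1 then 1 else 0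

/-- The diagonal operator `D_k v_j = q^{s(k)δ_{kj} − s(k+1)δ_{k+1,j}} v_j`
(0-based `k`, so `s(k) = 1` iff `k < m`, and `s(k) = −1` otherwise). -/
def Dmat (x xinv : R) (m : ℕ) {N : ℕ} (k : ℕ) : Matrix (Fin N) (Fin N) R :=
  fun a b => if a = b then
    (if (a : ℕ) = k then (if k < m then x else xinv)
     else if (a : ℕ) = k + 1 then (if k + 1 < m then xinv else x) else 1)
  else 0

/-- The inverse `D_k⁻¹` of `Dmat` (obtained by exchanging `q` and `q⁻¹`). -/
def Dinvmat (x xinv : R) (m : ℕ) {N : ℕ} (k : ℕ) : Matrix (Fin N) (Fin N) R :=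
  Dmat xinv x m k

/-- `S^{p(k)}`, where `p(k) = 1` if the 0-based `k` satisfies `k + 1 = m` (the odd simple
root) and `p(k) = 0` otherwise. -/
def SPmat (R : Type*) [CommRing R] (m : ℕ) {N : ℕ} (k : ℕ) : Matrix (Fin N) (Fin N) R :=
  if k + 1 = m then Smat R m else 1

/-- Kronecker (tensor) product of `r` one-site operators, as a matrix on `V^{⊗ r}`. -/
def kron {N r : ℕ} (M : Fin r → Matrix (Fin N) (Fin N) R) :
    Matrix (Fin r → Fin N) (Fin r → Fin N) R :=
  fun a b => ∏ j, M j (a j) (b j)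

/-- `ρ_r(σ) = S^{⊗ r}`. -/
def rhoSigma (R : Type*) [CommRing R] (m : ℕ) {N : ℕ} (r : ℕ) :
    Matrix (Fin r → Fin N) (Fin r → Fin N) R :=
  kron fun _ => Smat R m

/-- `ρ_r(q^{δ_b}) = Q_b^{⊗ r}` (and its inverse, substituting `q⁻¹` for `x`). -/
def rhoQ (x : R) {N : ℕ} (r : ℕ) (b0 : Fin N) :
    Matrix (Fin r → Fin N) (Fin r → Fin N) R :=
  kron fun _ => Qmat x b0

/-- `ρ_r(e_k) = Σ_{j=1}^{r} (S^{p(k)})^{⊗(j−1)} ⊗ E_k ⊗ (D_k^{−1})^{⊗(r−j)}`. -/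
def rhoE (x xinv : R) (m : ℕ) {N : ℕ} (r : ℕ) (k : ℕ) :
    Matrix (Fin r → Fin N) (Fin r → Fin N) R :=
  ∑ p : Fin r, kron fun j =>
    if j < p then SPmat R m k else if j = p then Emat R k else Dinvmat x xinv m k

/-- `ρ_r(f_k) = Σ_{j=1}^{r} (S^{p(k)}D_k)^{⊗(j−1)} ⊗ F_k ⊗ Id^{⊗(r−j)}`. -/
def rhoF (x xinv : R) (m : ℕ) {N : ℕ} (r : ℕ) (k : ℕ) :
    Matrix (Fin r → Fin N) (Fin r → Fin N) R :=
  ∑ p : Fin r, kron fun j =>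
    if j < p then SPmat R m k * Dmat x xinv m k else if j = p then Fmat R k else 1

/-- The generators `T_1, …, T_{r−1}` of the image of the sign `q`-permutation
representation of the Iwahori–Hecke algebra on `V^{⊗ r}`. -/
def heckeGens (x xinv : R) (m : ℕ) {N : ℕ} (r : ℕ) :
    Set (Matrix (Fin r → Fin N) (Fin r → Fin N) R) :=
  {M | ∃ (i : ℕ) (h : i + 1 < r), M = heckeOp x xinv m r i h}

/-- The signed-swap generators `P_1, …, P_{r−1}` (the `q → 1` specialization). -/
def swapGens (R : Type*) [CommRing R] (m : ℕ) {N : ℕ} (r : ℕ) :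
    Set (Matrix (Fin r → Fin N) (Fin r → Fin N) R) :=
  {M | ∃ (i : ℕ) (h : i + 1 < r), M = swapOp R m r i h}

/-- The generators `ρ_r(σ)`, `ρ_r(q^{± δ_b})` (`1 ≤ b ≤ N`), `ρ_r(e_k)`, `ρ_r(f_k)`
(`1 ≤ k ≤ N−1`) of the image of the vector representation of `U_q^σ(gl(m,n))`. -/
def quantumGens (x xinv : R) (m : ℕ) {N : ℕ} (r : ℕ) :
    Set (Matrix (Fin r → Fin N) (Fin r → Fin N) R) :=
  {rhoSigma R m r} ∪ (Set.range fun b : Fin N => rhoQ x r b)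
    ∪ (Set.range fun b : Fin N => rhoQ xinv r b)
    ∪ (Set.range fun k : Fin (N - 1) => rhoE x xinv m r (k : ℕ))
    ∪ (Set.range fun k : Fin (N - 1) => rhoF x xinv m r (k : ℕ))

end CommonDefs

section BraidAux
variable {R : Type*} [CommRing R]

/-- Diagonal coefficient of `T` in the delta decomposition. -/
def Ac (x xinv : R) (m : ℕ) {N : ℕ} (u v : Fin N) : R :=
  if u = v then (if (u:ℕ) < m then x else -xinv) else if (u:ℕ) < (v:ℕ) then x - xinv else 0

/-- Swap coefficient of `T` in the delta decomposition. -/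
def Bc (R : Type*) [CommRing R] (m : ℕ) {N : ℕ} (u v : Fin N) : R :=
  if u = v then 0 else sgn R m u v

lemma Tent_decomp (x xinv : R) (m : ℕ) {N : ℕ} (p p' : Fin N × Fin N) :
    Tent x xinv m p p' = Ac x xinv m p.1 p.2 * (if p' = p then 1 else 0)
      + Bc R m p.1 p.2 * (if p' = (p.2, p.1) then 1 else 0) := by
  rcases p with ⟨u, v⟩
  by_cases huv : u = v
  · subst huv; simp [Tent, Ac, Bc]
  · have h2 : (u:ℕ) ≠ (v:ℕ) := fun h => huv (Fin.ext h)
    rcases lt_trichotomy (u:ℕ) (v:ℕ) with h | h | h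
    · simp only [Tent, Ac, Bc, if_neg huv, if_pos h]; ring
    · exact absurd h h2
    · simp only [Tent, Ac, Bc, if_neg huv, if_neg (not_lt.mpr h.le)]; ring

/-- Swap of two tensor slots. -/
def sw {N r : ℕ} (k₀ k₁ : Fin r) (a : Fin r → Fin N) : Fin r → Fin N :=
  Function.update (Function.update a k₀ (a k₁)) k₁ (a k₀)

lemma sw_apply₁ {N r : ℕ} (k₀ k₁ : Fin r) (a : Fin r → Fin N) : sw k₀ k₁ a k₁ = a k₀ := by
  simp [sw]

lemma sw_apply₀ {N r : ℕ} {k₀ k₁ : Fin r} (hne : k₀ ≠ k₁) (a : Fin r → Fin N) :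
    sw k₀ k₁ a k₀ = a k₁ := by
  simp [sw, Function.update_of_ne hne]

lemma sw_apply_ne {N r : ℕ} {k₀ k₁ j : Fin r} (h0 : j ≠ k₀) (h1 : j ≠ k₁)
    (a : Fin r → Fin N) : sw k₀ k₁ a j = a j := by
  simp [sw, Function.update_of_ne h0, Function.update_of_ne h1]

lemma delta_glue {N r : ℕ} (k₀ k₁ : Fin r) (a b c : Fin r → Fin N)
    (hrest : ∀ j, j ≠ k₀ → j ≠ k₁ → c j = a j) :
    (if (b k₀, b k₁) = (c k₀, c k₁) then (1:R) else 0)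
      * ∏ j ∈ Finset.univ \ ({k₀, k₁} : Finset (Fin r)), (if a j = b j then (1:R) else 0)
    = if b = c then 1 else 0 := by
  rw [Finset.prod_boole]
  have hmul : ∀ (P Q : Prop) [Decidable P] [Decidable Q],
      (if P then (1:R) else 0) * (if Q then 1 else 0) = if P ∧ Q then 1 else 0 := by
    intros P Q _ _; split_ifs <;> simp_all
  rw [hmul]
  have hiff : ((b k₀, b k₁) = (c k₀, c k₁)
      ∧ ∀ j ∈ Finset.univ \ ({k₀, k₁} : Finset (Fin r)), a j = b j) ↔ b = c := by
    constructor
    · rintro ⟨hpair, hr⟩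
      have h0 : b k₀ = c k₀ := congrArg Prod.fst hpair
      have h1 : b k₁ = c k₁ := congrArg Prod.snd hpair
      funext j
      rcases eq_or_ne j k₀ with rfl | hj0
      · exact h0
      rcases eq_or_ne j k₁ with rfl | hj1
      · exact h1
      · have h2 : a j = b j := hr j (by simp [hj0, hj1])
        rw [← h2]; exact (hrest j hj0 hj1).symm
    · rintro rfl
      refine ⟨rfl, fun j hj => ?_⟩
      simp only [Finset.mem_sdiff, Finset.mem_univ, Finset.mem_insert,
        Finset.mem_singleton, true_and] at hj
      push_neg at hj
      exact (hrest j hj.1 hj.2).symm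
  simp only [hiff]

lemma heckeOp_apply (x xinv : R) (m : ℕ) {N : ℕ} (r k : ℕ) (h : k + 1 < r)
    (a b : Fin r → Fin N) :
    heckeOp x xinv m r k h a b
      = Ac x xinv m (a ⟨k, Nat.lt_of_succ_lt h⟩) (a ⟨k + 1, h⟩) * (if b = a then 1 else 0)
        + Bc R m (a ⟨k, Nat.lt_of_succ_lt h⟩) (a ⟨k + 1, h⟩)
          * (if b = sw ⟨k, Nat.lt_of_succ_lt h⟩ ⟨k + 1, h⟩ a then 1 else 0) := by
  set k₀ : Fin r := ⟨k, Nat.lt_of_succ_lt h⟩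
  set k₁ : Fin r := ⟨k + 1, h⟩
  have hne : k₀ ≠ k₁ := by simp [k₀, k₁, Fin.ext_iff]
  rw [heckeOp, twoSiteOp, Tent_decomp, add_mul, mul_assoc, mul_assoc]
  congr 1
  · rw [delta_glue k₀ k₁ a b a (fun _ _ _ => rfl)]
  · have e : ((a k₀, a k₁).2, (a k₀, a k₁).1) = (sw k₀ k₁ a k₀, sw k₀ k₁ a k₁) := by
      simp [sw_apply₀ hne, sw_apply₁]
    rw [e, delta_glue k₀ k₁ a b (sw k₀ k₁ a) (fun j h0 h1 => sw_apply_ne h0 h1 a)]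

lemma rowTwo_mul {N r : ℕ} (M X : Matrix (Fin r → Fin N) (Fin r → Fin N) R)
    (f g : (Fin r → Fin N) → R) (s : (Fin r → Fin N) → (Fin r → Fin N))
    (hM : ∀ a c, M a c = f a * (if c = a then (1:R) else 0) + g a * (if c = s a then 1 else 0))
    (a b : Fin r → Fin N) :
    (M * X) a b = f a * X a b + g a * X (s a) b := by
  rw [Matrix.mul_apply]
  rw [Finset.sum_congr rfl (fun c _ => by rw [hM a c])]
  simp [add_mul, ite_mul, mul_ite, Finset.sum_add_distrib, mul_assoc, Finset.sum_ite_eq',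
    Finset.mem_univ]

lemma heckeMul_apply (x xinv : R) (m : ℕ) {N : ℕ} (r k : ℕ) (h : k + 1 < r)
    (X : Matrix (Fin r → Fin N) (Fin r → Fin N) R) (a b : Fin r → Fin N) :
    (heckeOp x xinv m (N := N) r k h * X) a b
      = Ac x xinv m (a ⟨k, Nat.lt_of_succ_lt h⟩) (a ⟨k + 1, h⟩) * X a b
        + Bc R m (a ⟨k, Nat.lt_of_succ_lt h⟩) (a ⟨k + 1, h⟩)
          * X (sw ⟨k, Nat.lt_of_succ_lt h⟩ ⟨k + 1, h⟩ a) b := by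
  exact rowTwo_mul _ X _ _ _ (fun a c => heckeOp_apply x xinv m r k h a c) a b



lemma sw_fix {N r : ℕ} {k₀ k₁ : Fin r} (hne : k₀ ≠ k₁) {c : Fin r → Fin N}
    (h : c k₀ = c k₁) : sw k₀ k₁ c = c := by
  funext j
  rcases eq_or_ne j k₀ with rfl | h0
  · rw [sw_apply₀ hne, h]
  rcases eq_or_ne j k₁ with rfl | h1
  · rw [sw_apply₁, h]
  · rw [sw_apply_ne h0 h1]

lemma sw_sw {N r : ℕ} {k₀ k₁ : Fin r} (hne : k₀ ≠ k₁) (c : Fin r → Fin N) :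
    sw k₀ k₁ (sw k₀ k₁ c) = c := by
  funext j
  rcases eq_or_ne j k₀ with rfl | h0
  · rw [sw_apply₀ hne, sw_apply₁]
  rcases eq_or_ne j k₁ with rfl | h1
  · rw [sw_apply₁, sw_apply₀ hne]
  · rw [sw_apply_ne h0 h1, sw_apply_ne h0 h1]

lemma sw_braid {N r : ℕ} {k₀ k₁ k₂ : Fin r} (ne01 : k₀ ≠ k₁) (ne12 : k₁ ≠ k₂)
    (ne02 : k₀ ≠ k₂) (c : Fin r → Fin N) :
    sw k₀ k₁ (sw k₁ k₂ (sw k₀ k₁ c)) = sw k₁ k₂ (sw k₀ k₁ (sw k₁ k₂ c)) := by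
  funext j
  rcases eq_or_ne j k₀ with rfl | h0
  · simp [sw_apply₁, sw_apply₀ ne01, sw_apply₀ ne12, sw_apply_ne ne01 ne02,
      sw_apply_ne (Ne.symm ne02) (Ne.symm ne12)]
  rcases eq_or_ne j k₁ with rfl | h1
  · simp [sw_apply₁, sw_apply₀ ne01, sw_apply₀ ne12, sw_apply_ne ne01 ne02,
      sw_apply_ne (Ne.symm ne02) (Ne.symm ne12)]
  rcases eq_or_ne j k₂ with rfl | h2
  · simp [sw_apply₁, sw_apply₀ ne01, sw_apply₀ ne12, sw_apply_ne ne01 ne02,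
      sw_apply_ne (Ne.symm ne02) (Ne.symm ne12)]
  · simp [sw_apply_ne h0 h1, sw_apply_ne h1 h2]

set_option linter.unusedTactic false in
set_option linter.unreachableTactic false in
lemma braid_scalar {K : Type*} [Field K] (x : K) (hx : x ≠ 0) (m : ℕ) {N : ℕ}
    (u v w : Fin N) (te t1 t2 t21 t12 tw : K)
    (h1 : u = v → t1 = te ∧ t21 = t2 ∧ tw = t12)
    (h2 : v = w → t2 = te ∧ t12 = t1 ∧ tw = t21)
    (h3 : u = w → tw = te ∧ t21 = t1 ∧ t12 = t2) :
    Ac x x⁻¹ m u v * (Ac x x⁻¹ m v w * (Ac x x⁻¹ m u v * te + Bc K m u v * t1)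
        + Bc K m v w * (Ac x x⁻¹ m u w * t2 + Bc K m u w * t12))
      + Bc K m u v * (Ac x x⁻¹ m u w * (Ac x x⁻¹ m v u * t1 + Bc K m v u * te)
        + Bc K m u w * (Ac x x⁻¹ m v w * t21 + Bc K m v w * tw))
    = Ac x x⁻¹ m v w * (Ac x x⁻¹ m u v * (Ac x x⁻¹ m v w * te + Bc K m v w * t2)
        + Bc K m u v * (Ac x x⁻¹ m u w * t1 + Bc K m u w * t21))
      + Bc K m v w * (Ac x x⁻¹ m u w * (Ac x x⁻¹ m w v * t2 + Bc K m w v * te)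
        + Bc K m u w * (Ac x x⁻¹ m u v * t12 + Bc K m u v * tw)) := by
  by_cases e1 : u = v
  · obtain ⟨a1, a2, a3⟩ := h1 e1
    subst a1 a2 a3 e1
    by_cases e2 : u = w
    · obtain ⟨b1, b2, b3⟩ := h2 e2
      subst b1 b2 e2
      simp [Ac, Bc]
    · have e2' : ¬((u:ℕ) = (w:ℕ)) := fun h => e2 (Fin.ext h)
      have e2'' : ¬((w:ℕ) = (u:ℕ)) := by omega
      by_cases d1 : (u:ℕ) < m <;> by_cases d3 : (w:ℕ) < m <;>
        · simp [Ac, Bc, sgn, deg, Fin.ext_iff, -Fin.val_fin_lt, e2', e2'', d1, d3]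
          split_ifs <;> first | (exfalso; omega) | ring1 | (field_simp; ring1)
  · by_cases e2 : v = w
    · obtain ⟨b1, b2, b3⟩ := h2 e2
      subst b1 b2 b3 e2
      have e1' : ¬((u:ℕ) = (v:ℕ)) := fun h => e1 (Fin.ext h)
      have e1'' : ¬((v:ℕ) = (u:ℕ)) := by omega
      by_cases d1 : (u:ℕ) < m <;> by_cases d2 : (v:ℕ) < m <;>
        · simp [Ac, Bc, sgn, deg, Fin.ext_iff, -Fin.val_fin_lt, e1', e1'', d1, d2]
          split_ifs <;> first | (exfalso; omega) | ring1 | (field_simp; ring1)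
    · by_cases e3 : u = w
      · obtain ⟨c1, c2, c3⟩ := h3 e3
        subst c1 c2 c3 e3
        have e1' : ¬((u:ℕ) = (v:ℕ)) := fun h => e1 (Fin.ext h)
        have e1'' : ¬((v:ℕ) = (u:ℕ)) := by omega
        by_cases d1 : (u:ℕ) < m <;> by_cases d2 : (v:ℕ) < m <;>
          · simp [Ac, Bc, sgn, deg, Fin.ext_iff, -Fin.val_fin_lt, e1', e1'', d1, d2]
            split_ifs <;> first | (exfalso; omega) | ring1 | (field_simp; ring1)
      · have e1' : ¬((u:ℕ) = (v:ℕ)) := fun h => e1 (Fin.ext h)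
        have e1'' : ¬((v:ℕ) = (u:ℕ)) := by omega
        have e2' : ¬((v:ℕ) = (w:ℕ)) := fun h => e2 (Fin.ext h)
        have e2'' : ¬((w:ℕ) = (v:ℕ)) := by omega
        have e3' : ¬((u:ℕ) = (w:ℕ)) := fun h => e3 (Fin.ext h)
        have e3'' : ¬((w:ℕ) = (u:ℕ)) := by omega
        by_cases d1 : (u:ℕ) < m <;> by_cases d2 : (v:ℕ) < m <;> by_cases d3 : (w:ℕ) < m <;>
          · simp [Ac, Bc, sgn, deg, Fin.ext_iff, -Fin.val_fin_lt, e1', e1'', e2', e2'',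
              e3', e3'', d1, d2, d3]
            split_ifs <;> first | (exfalso; omega) | ring1 | (field_simp; ring1)

lemma braid_core {K : Type*} [Field K] (x : K) (hx : x ≠ 0) (m N r k : ℕ)
    (h0 : k + 1 < r) (h1 : k + 1 + 1 < r) :
    heckeOp x x⁻¹ m (N := N) r k h0 * heckeOp x x⁻¹ m (N := N) r (k + 1) h1
        * heckeOp x x⁻¹ m (N := N) r k h0
      = heckeOp x x⁻¹ m (N := N) r (k + 1) h1 * heckeOp x x⁻¹ m (N := N) r k h0
        * heckeOp x x⁻¹ m (N := N) r (k + 1) h1 := by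
  rw [Matrix.mul_assoc, Matrix.mul_assoc]
  ext a b
  simp only [heckeMul_apply, heckeOp_apply]
  have enorm : ∀ (p : k + 1 < r), (⟨k + 1, p⟩ : Fin r) = ⟨k + 1, h0⟩ := fun _ => rfl
  simp only [enorm]
  set k₀ : Fin r := ⟨k, Nat.lt_of_succ_lt h0⟩ with hk₀
  set k₁ : Fin r := ⟨k + 1, h0⟩ with hk₁
  set k₂ : Fin r := ⟨k + 1 + 1, h1⟩ with hk₂
  have ne01 : k₀ ≠ k₁ := by simp [hk₀, hk₁, Fin.ext_iff]
  have ne12 : k₁ ≠ k₂ := by simp [hk₁, hk₂, Fin.ext_iff]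
  have ne02 : k₀ ≠ k₂ := by simp [hk₀, hk₂, Fin.ext_iff]; omega
  have v1 : ∀ c : Fin r → Fin N, sw k₀ k₁ c k₀ = c k₁ := fun c => sw_apply₀ ne01 c
  have v2 : ∀ c : Fin r → Fin N, sw k₀ k₁ c k₁ = c k₀ := fun c => sw_apply₁ k₀ k₁ c
  have v3 : ∀ c : Fin r → Fin N, sw k₀ k₁ c k₂ = c k₂ :=
    fun c => sw_apply_ne (Ne.symm ne02) (Ne.symm ne12) c
  have v4 : ∀ c : Fin r → Fin N, sw k₁ k₂ c k₀ = c k₀ :=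
    fun c => sw_apply_ne ne01 ne02 c
  have v5 : ∀ c : Fin r → Fin N, sw k₁ k₂ c k₁ = c k₂ := fun c => sw_apply₀ ne12 c
  have v6 : ∀ c : Fin r → Fin N, sw k₁ k₂ c k₂ = c k₁ := fun c => sw_apply₁ k₁ k₂ c
  simp only [v1, v2, v3, v4, v5, v6, sw_sw ne01, sw_sw ne12]
  rw [sw_braid ne01 ne12 ne02 a]
  refine braid_scalar x hx m (a k₀) (a k₁) (a k₂) _ _ _ _ _ _ ?_ ?_ ?_
  · intro e
    have s1a : sw k₀ k₁ a = a := sw_fix ne01 e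
    refine ⟨by rw [s1a], by rw [s1a], ?_⟩
    have hc : sw k₁ k₂ (sw k₀ k₁ (sw k₁ k₂ a)) = sw k₀ k₁ (sw k₁ k₂ a) := by
      refine sw_fix ne12 ?_
      rw [v2, v4, v3, v6]; exact e
    rw [hc]
  · intro e
    have s2a : sw k₁ k₂ a = a := sw_fix ne12 e
    exact ⟨by rw [s2a], by rw [s2a], by rw [s2a]⟩
  · intro e
    have c1 : sw k₀ k₁ (sw k₁ k₂ a) = sw k₁ k₂ a := by
      refine sw_fix ne01 ?_
      rw [v4, v5]; exact e
    have c2 : sw k₁ k₂ (sw k₀ k₁ a) = sw k₀ k₁ a := by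
      refine sw_fix ne12 ?_
      rw [v2, v3]; exact e
    exact ⟨by rw [c1, sw_sw ne12], by rw [c2], by rw [c1]⟩

end BraidAux

/-- The base field `K = ℚ(q)` of rational functions over `ℚ`. -/
abbrev 𝕂 : Type := RatFunc ℚ

/-- The indeterminate `q` of `K = ℚ(q)`. -/
noncomputable def q : 𝕂 := RatFunc.X

/-- For every `i` with `1 ≤ i ≤ r−2`, the braid relation
`T_i T_{i+1} T_i = T_{i+1} T_i T_{i+1}` holds in `End_K(V^{⊗ r})`. -/
theorem hecke_braid_relation (m n r : ℕ) (hm : 1 ≤ m) (hn : 1 ≤ n) (hr : 3 ≤ r)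
    (i : ℕ) (hi1 : 1 ≤ i) (hi2 : i ≤ r - 2) :
    heckeOp q q⁻¹ m (N := m + n) r (i - 1) (by omega) * heckeOp q q⁻¹ m (N := m + n) r i (by omega) * heckeOp q q⁻¹ m (N := m + n) r (i - 1) (by omega)
      = heckeOp q q⁻¹ m (N := m + n) r i (by omega) * heckeOp q q⁻¹ m (N := m + n) r (i - 1) (by omega) * heckeOp q q⁻¹ m (N := m + n) r i (by omega) := by
  obtain ⟨k, rfl⟩ : ∃ k, i = k + 1 := ⟨i - 1, by omega⟩
  have h0 : k + 1 < r := by omega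
  have h1 : k + 1 + 1 < r := by omega
  show heckeOp q q⁻¹ m (N := m + n) r k h0 * heckeOp q q⁻¹ m (N := m + n) r (k + 1) h1
        * heckeOp q q⁻¹ m (N := m + n) r k h0
      = heckeOp q q⁻¹ m (N := m + n) r (k + 1) h1 * heckeOp q q⁻¹ m (N := m + n) r k h0
        * heckeOp q q⁻¹ m (N := m + n) r (k + 1) h1
  exact braid_core q (by unfold q; exact RatFunc.X_ne_zero) m (m + n) r k h0 h1
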